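/- The 3×3 skew-symmetric matrix C with rows (0, 0, −1), (0, 0, −1), (1, 1, 0) is an unfolding of the 2×2 skew-symmetrizable matrix B with rows (0, −2), (1, 0), with respect to the index sets E_1 = {1, 2} and E_2 = {3}: for every finite sequence k_1, …, k_r of indices in {1, 2}, the matrix μ̂_{k_1}⋯μ̂_{k_r}(C) satisfies assertions (1)–(2) with respect to μ_{k_1}⋯μ_{k_r}(B). -/

import Mathlib

open Matrix

/-- Matrix mutation in direction `k`. -/
def mutate {n : ℕ} (B : Matrix (Fin n) (Fin n) ℤ) (k : Fin n) : Matrix (Fin n) (Fin n) ℤ :=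
  Matrix.of fun i j =>
    if i = k ∨ j = k then -B i j
    else B i j + (|B i k| * B k j + B i k * |B k j|) / 2

/-- The mutation class of `B`: all matrices obtained from `B` by finite sequences of mutations. -/
def mutationClass {n : ℕ} (B : Matrix (Fin n) (Fin n) ℤ) : Set (Matrix (Fin n) (Fin n) ℤ) :=
  {B' | ∃ l : List (Fin n), B' = l.foldl mutate B}

/-- `B` is skew-symmetrizable: there are positive integers `d i` with `b_ij d_j = -(b_ji d_i)`. -/
def IsSkewSymmetrizable {n : ℕ} (B : Matrix (Fin n) (Fin n) ℤ) : Prop :=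
  ∃ d : Fin n → ℤ, (∀ i, 0 < d i) ∧ ∀ i j, B i j * d j = -(B j i * d i)

/-- Assertions (1)–(2) of the definition of unfolding, for the fibers `E i = π ⁻¹ {i}`:
(1) for all `i` and all `b` the sum of `C a b` over `a ∈ E i` equals `B i (π b)`;
(2) if `B (π a) (π b) ≥ 0` then `C a b ≥ 0`. -/
def SatisfiesUnfoldingConds {m n : ℕ} (π : Fin m → Fin n)
    (B : Matrix (Fin n) (Fin n) ℤ) (C : Matrix (Fin m) (Fin m) ℤ) : Prop :=
  (∀ (i : Fin n) (b : Fin m),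
      (∑ a ∈ Finset.univ.filter (fun a => π a = i), C a b) = B i (π b)) ∧
  (∀ a b : Fin m, 0 ≤ B (π a) (π b) → 0 ≤ C a b)

/-- The composite mutation `μ̂_i`: the composition of the mutations `μ_a` over all
`a ∈ E i = π ⁻¹ {i}`, performed in a fixed order. -/
def compMutate {m n : ℕ} (π : Fin m → Fin n) (C : Matrix (Fin m) (Fin m) ℤ)
    (i : Fin n) : Matrix (Fin m) (Fin m) ℤ :=
  ((Finset.univ.filter (fun a => π a = i)).sort (· ≤ ·)).foldl mutate C

/-- `C` is an unfolding of `B` (w.r.t. the index sets `E i = π ⁻¹ {i}`): after any finite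
sequence of composite mutations, assertions (1)–(2) hold for the correspondingly
mutated matrices. -/
def IsUnfolding {m n : ℕ} (π : Fin m → Fin n) (B : Matrix (Fin n) (Fin n) ℤ)
    (C : Matrix (Fin m) (Fin m) ℤ) : Prop :=
  ∀ l : List (Fin n),
    SatisfiesUnfoldingConds π (l.foldl mutate B) (l.foldl (compMutate π) C)

section Aux

private def π₀ : Fin 3 → Fin 2 := ![0, 0, 1]
private def B₀ : Matrix (Fin 2) (Fin 2) ℤ := !![0, -2; 1, 0]
private def C₀ : Matrix (Fin 3) (Fin 3) ℤ := !![0, 0, -1; 0, 0, -1; 1, 1, 0]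
private def B₁ : Matrix (Fin 2) (Fin 2) ℤ := !![0, 2; -1, 0]
private def C₁ : Matrix (Fin 3) (Fin 3) ℤ := !![0, 0, 1; 0, 0, 1; -1, -1, 0]

private lemma mutB₀ (k : Fin 2) : mutate B₀ k = B₁ := by
  ext i j
  fin_cases k <;> fin_cases i <;> fin_cases j <;>
    simp [mutate, B₀, B₁]

private lemma mutB₁ (k : Fin 2) : mutate B₁ k = B₀ := by
  ext i j
  fin_cases k <;> fin_cases i <;> fin_cases j <;>
    simp [mutate, B₀, B₁]

private lemma sort0 : ((Finset.univ.filter (fun a => π₀ a = 0)).sort (· ≤ ·)) = [0, 1] := by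
  have h : (Finset.univ.filter (fun a => π₀ a = 0)) = ({0, 1} : Finset (Fin 3)) := by decide
  rw [h, Finset.sort_insert, Finset.sort_singleton] <;> decide

private lemma sort1 : ((Finset.univ.filter (fun a => π₀ a = 1)).sort (· ≤ ·)) = [2] := by
  have h : (Finset.univ.filter (fun a => π₀ a = 1)) = ({2} : Finset (Fin 3)) := by decide
  rw [h, Finset.sort_singleton]

private lemma mutC₀ (i : Fin 2) : compMutate π₀ C₀ i = C₁ := by
  have h0 : compMutate π₀ C₀ 0 = C₁ := by
    rw [compMutate, sort0]
    ext a b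
    fin_cases a <;> fin_cases b <;> simp [mutate, C₀, C₁]
  have h1 : compMutate π₀ C₀ 1 = C₁ := by
    rw [compMutate, sort1]
    ext a b
    fin_cases a <;> fin_cases b <;> simp [mutate, C₀, C₁]
  fin_cases i
  · exact h0
  · exact h1

private lemma mutC₁ (i : Fin 2) : compMutate π₀ C₁ i = C₀ := by
  have h0 : compMutate π₀ C₁ 0 = C₀ := by
    rw [compMutate, sort0]
    ext a b
    fin_cases a <;> fin_cases b <;> simp [mutate, C₀, C₁]
  have h1 : compMutate π₀ C₁ 1 = C₀ := by
    rw [compMutate, sort1]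
    ext a b
    fin_cases a <;> fin_cases b <;> simp [mutate, C₀, C₁]
  fin_cases i
  · exact h0
  · exact h1

private lemma key (l : List (Fin 2)) :
    (l.foldl mutate B₀ = B₀ ∧ l.foldl (compMutate π₀) C₀ = C₀) ∨
    (l.foldl mutate B₀ = B₁ ∧ l.foldl (compMutate π₀) C₀ = C₁) := by
  induction l using List.reverseRecOn with
  | nil => left; exact ⟨rfl, rfl⟩
  | append_singleton l k ih =>
    simp only [List.foldl_append, List.foldl_cons, List.foldl_nil]
    rcases ih with ⟨h1, h2⟩ | ⟨h1, h2⟩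
    · right; rw [h1, h2]; exact ⟨mutB₀ k, mutC₀ k⟩
    · left; rw [h1, h2]; exact ⟨mutB₁ k, mutC₁ k⟩

private lemma conds₀ : SatisfiesUnfoldingConds π₀ B₀ C₀ := by
  constructor
  · decide
  · intro a b h
    fin_cases a <;> fin_cases b <;> simp [B₀, B₁, C₀, C₁, π₀] at h ⊢

private lemma conds₁ : SatisfiesUnfoldingConds π₀ B₁ C₁ := by
  constructor
  · decide
  · intro a b h
    fin_cases a <;> fin_cases b <;> simp [B₀, B₁, C₀, C₁, π₀] at h ⊢

end Aux

/-- The given `3 × 3` skew-symmetric matrix is an unfolding of the `2 × 2` matrix `B` with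
rows `(0, -2), (1, 0)`, with `E_1 = {1, 2}` and `E_2 = {3}`. -/
theorem unfolding_example_two :
    IsUnfolding (![0, 0, 1] : Fin 3 → Fin 2)
      !![0, -2; 1, 0]
      !![0, 0, -1; 0, 0, -1; 1, 1, 0] := by
  intro l
  have : ∀ x, (![0, 0, 1] : Fin 3 → Fin 2) x = π₀ x := fun _ => rfl
  show SatisfiesUnfoldingConds π₀ (l.foldl mutate B₀) (l.foldl (compMutate π₀) C₀)
  rcases key l with ⟨h1, h2⟩ | ⟨h1, h2⟩
  · rw [h1, h2]; exact conds₀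
  · rw [h1, h2]; exact conds₁
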